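/- Let p(z) = z + a_2 z^2 + a_3 z^3 with real coefficients, a_3 > 0, and suppose x_0 := -a_2(1+a_3)/(4a_3) satisfies -1 < x_0 < 1. Then min_{|z|=1} |p(z)| = |1-a_3| · (1 - a_2^2/(4a_3))^{1/2}, attained exactly at the two points x_0 ± i√(1-x_0^2). -/

import Mathlib

theorem stmt_12 (a₂ a₃ : ℝ) (ha₃ : 0 < a₃)
    (x₀ : ℝ) (hx₀ : x₀ = -(a₂ * (1 + a₃)) / (4 * a₃)) (h₁ : -1 < x₀) (h₂ : x₀ < 1)
    (p : ℂ → ℂ) (hp : ∀ z, p z = z + (a₂ : ℂ) * z ^ 2 + (a₃ : ℂ) * z ^ 3) :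
    (∀ z : ℂ, ‖z‖ = 1 →
        |1 - a₃| * Real.sqrt (1 - a₂ ^ 2 / (4 * a₃)) ≤ ‖p z‖) ∧
      (∀ z : ℂ, ‖z‖ = 1 →
        (‖p z‖ = |1 - a₃| * Real.sqrt (1 - a₂ ^ 2 / (4 * a₃)) ↔
          z = Complex.mk x₀ (Real.sqrt (1 - x₀ ^ 2)) ∨
            z = Complex.mk x₀ (-Real.sqrt (1 - x₀ ^ 2)))) := by
  have hs3 : (0:ℝ) < 4 * a₃ := by linarith
  have ha : a₂ * (1 + a₃) = -(4 * a₃ * x₀) := by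
    rw [hx₀]; field_simp
  -- a₂² ≤ 4 a₃
  have ha2 : a₂ ^ 2 * (1 + a₃) ^ 2 = 16 * a₃ ^ 2 * x₀ ^ 2 := by
    have := congrArg (· ^ 2) ha
    linear_combination this
  have hx2 : x₀ ^ 2 < 1 := by nlinarith
  have hle : a₂ ^ 2 ≤ 4 * a₃ := by
    nlinarith [sq_nonneg (1 - a₃), sq_nonneg (1 + a₃), mul_pos ha₃ ha₃]
  have hq : (0:ℝ) ≤ 1 - a₂ ^ 2 / (4 * a₃) := by
    have : a₂ ^ 2 / (4 * a₃) ≤ 1 := (div_le_one hs3).mpr hle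
    linarith
  set M : ℝ := |1 - a₃| * Real.sqrt (1 - a₂ ^ 2 / (4 * a₃)) with hM
  have hM0 : 0 ≤ M := mul_nonneg (abs_nonneg _) (Real.sqrt_nonneg _)
  have hM2 : M ^ 2 = (1 - a₃) ^ 2 * (1 - a₂ ^ 2 / (4 * a₃)) := by
    rw [hM, mul_pow, sq_abs, Real.sq_sqrt hq]
  -- the key identity for the quadratic in x
  have hid : ∀ x : ℝ, (a₂ + (1 + a₃) * x) ^ 2 + (1 - a₃) ^ 2 * (1 - x ^ 2)
      = (1 - a₃) ^ 2 * (1 - a₂ ^ 2 / (4 * a₃)) + 4 * a₃ * (x - x₀) ^ 2 := by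
    intro x
    rw [hx₀]; field_simp; ring
  -- norm formula on the circle
  have key : ∀ z : ℂ, ‖z‖ = 1 →
      ‖p z‖ ^ 2 = (a₂ + (1 + a₃) * z.re) ^ 2 + (1 - a₃) ^ 2 * (1 - z.re ^ 2) := by
    intro z hz
    have hns : Complex.normSq z = 1 := by
      rw [Complex.normSq_eq_norm_sq, hz]; norm_num
    have hzsq : z.re ^ 2 + z.im ^ 2 = 1 := by
      have := hns
      rw [Complex.normSq_apply] at this
      linear_combination this
    have hc : z * (starRingEnd ℂ) z = 1 := by
      rw [Complex.mul_conj, hns]; norm_num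
    have hfac : p z = z ^ 2 * ((starRingEnd ℂ) z + (a₂:ℂ) + (a₃:ℂ) * z) := by
      rw [hp]; linear_combination (-z) * hc
    have hnorm : ‖p z‖ = ‖(starRingEnd ℂ) z + (a₂:ℂ) + (a₃:ℂ) * z‖ := by
      rw [hfac, norm_mul, norm_pow, hz]; ring
    rw [hnorm]
    have : ‖(starRingEnd ℂ) z + (a₂:ℂ) + (a₃:ℂ) * z‖ ^ 2
        = ((starRingEnd ℂ) z + (a₂:ℂ) + (a₃:ℂ) * z).re ^ 2
          + ((starRingEnd ℂ) z + (a₂:ℂ) + (a₃:ℂ) * z).im ^ 2 := by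
      rw [Complex.sq_norm, Complex.normSq_apply]; ring
    rw [this]
    simp only [Complex.add_re, Complex.add_im, Complex.conj_re, Complex.conj_im,
      Complex.mul_re, Complex.mul_im, Complex.ofReal_re, Complex.ofReal_im]
    linear_combination (1 - a₃) ^ 2 * hzsq
  have hs0 : (0:ℝ) ≤ 1 - x₀ ^ 2 := by linarith
  have hss : Real.sqrt (1 - x₀ ^ 2) ^ 2 = 1 - x₀ ^ 2 := Real.sq_sqrt hs0
  constructor
  · intro z hz
    have hk := key z hz
    have h2 : M ^ 2 ≤ ‖p z‖ ^ 2 := by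
      rw [hk, hid z.re, hM2]
      nlinarith [sq_nonneg (z.re - x₀)]
    calc M = Real.sqrt (M ^ 2) := (Real.sqrt_sq hM0).symm
      _ ≤ Real.sqrt (‖p z‖ ^ 2) := Real.sqrt_le_sqrt h2
      _ = ‖p z‖ := Real.sqrt_sq (norm_nonneg _)
  · intro z hz
    have hk := key z hz
    have hns : Complex.normSq z = 1 := by
      rw [Complex.normSq_eq_norm_sq, hz]; norm_num
    have hzsq : z.re ^ 2 + z.im ^ 2 = 1 := by
      rw [Complex.normSq_apply] at hns
      linear_combination hns
    constructor
    · intro h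
      have h2 : ‖p z‖ ^ 2 = M ^ 2 := by rw [h]
      rw [hk, hid z.re, hM2] at h2
      have h3 : 4 * a₃ * (z.re - x₀) ^ 2 = 0 := by linarith
      have h4 : (z.re - x₀) ^ 2 = 0 := by
        rcases mul_eq_zero.mp h3 with h' | h'
        · exact absurd h' (by positivity)
        · exact h'
      have hre : z.re = x₀ := by
        have := pow_eq_zero_iff (n := 2) (by norm_num) |>.mp h4
        linarith [sub_eq_zero.mp this]
      have him : z.im * z.im = Real.sqrt (1 - x₀ ^ 2) * Real.sqrt (1 - x₀ ^ 2) := by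
        linear_combination hzsq - hss - (z.re + x₀) * hre
      rcases mul_self_eq_mul_self_iff.mp him with h' | h'
      · left; apply Complex.ext <;> simp [hre, h']
      · right; apply Complex.ext <;> simp [hre, h']
    · intro h
      have hre : z.re = x₀ := by
        rcases h with h | h <;> rw [h]
      have h2 : ‖p z‖ ^ 2 = M ^ 2 := by
        rw [hk, hid z.re, hM2, hre]; ring
      calc ‖p z‖ = Real.sqrt (‖p z‖ ^ 2) := (Real.sqrt_sq (norm_nonneg _)).symm
        _ = Real.sqrt (M ^ 2) := by rw [h2]
        _ = M := Real.sqrt_sq hM0
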